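/- arXiv:1412.3704 — 2 statements merged into one kernel-verified Lean document; each statement's English description precedes it below -/
import Mathlib

section
/- The set of elements of C_{s,∞} fixed by τ equals k_s = F_q(t_1,…,t_s). -/
set_option maxHeartbeats 2000000
set_option synthInstance.maxHeartbeats 1000000

open MvPolynomial

section Helpers

/-- Real numbers fixed by `a ↦ a ^ q` are `0` or `1`. -/
lemma realFix {q : ℕ} (hq : 1 < q) {a : ℝ} (ha : 0 ≤ a) (h : a ^ q = a) :
    a = 0 ∨ a = 1 := by
  rcases eq_or_lt_of_le ha with h0 | h0
  · exact Or.inl h0.symm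
  · right
    by_contra hne
    rcases lt_or_gt_of_ne hne with hlt | hgt
    · have : a ^ q < a ^ 1 := pow_lt_pow_right_of_lt_one₀ h0 hlt hq
      rw [pow_one, h] at this
      exact lt_irrefl a this
    · have : a ^ 1 < a ^ q := pow_lt_pow_right₀ hgt hq
      rw [pow_one, h] at this
      exact lt_irrefl a this

variable {s : ℕ} {Cinf : Type*} [NormedField Cinf]

lemma gbdd (f : MvPolynomial (Fin s) Cinf) :
    BddAbove (Set.range fun d => ‖f.coeff d‖) := by
  classical
  refine ⟨∑ d ∈ f.support, ‖f.coeff d‖, ?_⟩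
  rintro x ⟨d, rfl⟩
  show ‖f.coeff d‖ ≤ _
  by_cases hd : d ∈ f.support
  · exact Finset.single_le_sum (fun i _ => norm_nonneg _) hd
  · rw [MvPolynomial.notMem_support_iff.mp hd, norm_zero]
    exact Finset.sum_nonneg fun i _ => norm_nonneg _

lemma le_gsup (f : MvPolynomial (Fin s) Cinf) (d : Fin s →₀ ℕ) :
    ‖f.coeff d‖ ≤ ⨆ d', ‖f.coeff d'‖ :=
  le_ciSup (gbdd f) d

lemma gsup_le {f : MvPolynomial (Fin s) Cinf} {B : ℝ}
    (h : ∀ d, ‖f.coeff d‖ ≤ B) : (⨆ d', ‖f.coeff d'‖) ≤ B :=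
  ciSup_le h

lemma gsup_attain {f : MvPolynomial (Fin s) Cinf} (hf : f ≠ 0) :
    ∃ d ∈ f.support, (⨆ d', ‖f.coeff d'‖) = ‖f.coeff d‖ := by
  classical
  obtain ⟨d, hd, hmax⟩ := f.support.exists_max_image (fun d => ‖f.coeff d‖)
    (MvPolynomial.support_nonempty.mpr hf)
  refine ⟨d, hd, le_antisymm (gsup_le fun d' => ?_) (le_gsup f d)⟩
  by_cases hd' : d' ∈ f.support
  · exact hmax d' hd'
  · rw [MvPolynomial.notMem_support_iff.mp hd', norm_zero]
    exact norm_nonneg _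

def Oball (hna : ∀ a b : Cinf, ‖a + b‖ ≤ max ‖a‖ ‖b‖) : Subring Cinf where
  carrier := {c | ‖c‖ ≤ 1}
  zero_mem' := by simp
  one_mem' := by simp
  add_mem' := by
    intro a b ha hb
    exact le_trans (hna a b) (max_le ha hb)
  neg_mem' := by intro a ha; simpa using ha
  mul_mem' := by
    intro a b ha hb
    calc ‖a * b‖ = ‖a‖ * ‖b‖ := norm_mul a b
      _ ≤ 1 * 1 := mul_le_mul ha hb (norm_nonneg _) zero_le_one
      _ = 1 := one_mul 1

def mball (hna : ∀ a b : Cinf, ‖a + b‖ ≤ max ‖a‖ ‖b‖) : Ideal (Oball hna) where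
  carrier := {c | ‖(c : Cinf)‖ < 1}
  zero_mem' := by simp
  add_mem' := by
    intro a b ha hb
    exact lt_of_le_of_lt (hna a b) (max_lt ha hb)
  smul_mem' := by
    intro a b hb
    simp only [Set.mem_setOf_eq, smul_eq_mul, Subring.coe_mul, norm_mul] at *
    calc ‖(a : Cinf)‖ * ‖(b : Cinf)‖ ≤ 1 * ‖(b : Cinf)‖ :=
        mul_le_mul_of_nonneg_right a.2 (norm_nonneg _)
      _ = ‖(b : Cinf)‖ := one_mul _
      _ < 1 := hb

lemma mball_isMaximal (hna : ∀ a b : Cinf, ‖a + b‖ ≤ max ‖a‖ ‖b‖) :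
    (mball hna).IsMaximal := by
  rw [Ideal.isMaximal_iff]
  constructor
  · show ¬(‖((1 : Oball hna) : Cinf)‖ < 1)
    simp
  · rintro J x hmJ hx hxJ
    have hx1 : ‖(x : Cinf)‖ = 1 := le_antisymm x.2 (not_lt.mp hx)
    have hxne : (x : Cinf) ≠ 0 := by
      intro h0; rw [h0, norm_zero] at hx1; norm_num at hx1
    have hinv : ‖(x : Cinf)⁻¹‖ ≤ 1 := by
      rw [norm_inv, hx1]; norm_num
    have : (⟨(x : Cinf)⁻¹, hinv⟩ : Oball hna) * x = 1 := by
      ext; simp [inv_mul_cancel₀ hxne]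
    rw [← this]
    exact J.mul_mem_left _ hxJ

lemma norm_multiset_prod' (m : Multiset Cinf) : ‖m.prod‖ = (m.map fun a => ‖a‖).prod := by
  induction m using Multiset.induction_on with
  | empty => simp
  | cons a m ih => simp [norm_mul, ih]

lemma liftFq (halg : IsAlgClosed Cinf) {q : ℕ} (hq : 1 < q) (b : Cinf)
    (hb : ‖b ^ q - b‖ < 1) : ∃ c : Cinf, c ^ q = c ∧ ‖b - c‖ < 1 := by
  classical
  set T : Polynomial Cinf := Polynomial.X ^ q - Polynomial.X with hT
  have hmonic : T.Monic := by
    apply Polynomial.monic_X_pow_sub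
    rw [Polynomial.degree_X]
    exact_mod_cast hq
  have hsplits : T.Splits := halg.splits T
  have hprod := hsplits.eq_prod_roots_of_monic hmonic
  have heval : b ^ q - b = (T.roots.map fun a => b - a).prod := by
    have := congrArg (Polynomial.eval b) hprod
    rw [Polynomial.eval_multiset_prod] at this
    simpa [hT, Multiset.map_map] using this
  have hnorm : ((T.roots.map fun a => b - a).map fun z => ‖z‖).prod < 1 := by
    rw [← norm_multiset_prod', ← heval]; exact hb
  have hex : ∃ a ∈ T.roots, ‖b - a‖ < 1 := by
    by_contra hcon
    push_neg at hcon
    have key : ∀ m : Multiset ℝ, (∀ x ∈ m, (1:ℝ) ≤ x) → 1 ≤ m.prod := by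
      intro m
      induction m using Multiset.induction_on with
      | empty => simp
      | cons a m ih =>
        intro h
        rw [Multiset.prod_cons]
        have h1 : (1:ℝ) ≤ a := h a (Multiset.mem_cons_self a m)
        have h2 : (1:ℝ) ≤ m.prod := ih fun x hx => h x (Multiset.mem_cons_of_mem hx)
        nlinarith
    have : (1 : ℝ) ≤ ((T.roots.map fun a => b - a).map fun z => ‖z‖).prod := by
      apply key
      intro x hx
      rw [Multiset.mem_map] at hx
      obtain ⟨z, hz, rfl⟩ := hx
      rw [Multiset.mem_map] at hz
      obtain ⟨a, ha, rfl⟩ := hz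
      exact hcon a ha
    linarith
  obtain ⟨a, ha, hlt⟩ := hex
  refine ⟨a, ?_, hlt⟩
  have := Polynomial.isRoot_of_mem_roots ha
  rw [hT] at this
  simpa [sub_eq_zero] using this

/-- Descent for rational functions fixed by a coefficientwise field endomorphism. -/
theorem fixedRat {K : Type*} [Field K] {σ : Type*} (e : K →+* K)
    (P Q : MvPolynomial σ K) (hQ : Q ≠ 0)
    (hrel : (MvPolynomial.map e P) * Q = P * (MvPolynomial.map e Q)) :
    ∃ P' Q' : MvPolynomial σ K, MvPolynomial.map e P' = P' ∧ MvPolynomial.map e Q' = Q' ∧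
      Q' ≠ 0 ∧ P * Q' = P' * Q := by
  classical
  have hinj : Function.Injective (MvPolynomial.map (σ := σ) e) :=
    MvPolynomial.map_injective e e.injective
  have hmapne : ∀ B : MvPolynomial σ K, B ≠ 0 → MvPolynomial.map e B ≠ 0 := by
    intro B hB h0
    exact hB (hinj (by simpa using h0))
  set D : MvPolynomial σ K → Prop := fun B => B ≠ 0 ∧ ∃ A, P * B = A * Q with hD
  have hDQ : D Q := ⟨hQ, P, rfl⟩
  have hQe := hmapne Q hQ
  have hstab : ∀ B, D B → D (MvPolynomial.map e B) := by
    rintro B ⟨hB0, A, hA⟩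
    refine ⟨hmapne B hB0, MvPolynomial.map e A, ?_⟩
    have h1 : (MvPolynomial.map e P) * (MvPolynomial.map e B)
        = (MvPolynomial.map e A) * (MvPolynomial.map e Q) := by
      rw [← map_mul, ← map_mul, hA]
    have h2 : P * MvPolynomial.map e B * MvPolynomial.map e Q
        = MvPolynomial.map e A * Q * MvPolynomial.map e Q := by
      calc P * MvPolynomial.map e B * MvPolynomial.map e Q
          = (P * MvPolynomial.map e Q) * MvPolynomial.map e B := by ring
        _ = (MvPolynomial.map e P * Q) * MvPolynomial.map e B := by rw [← hrel]
        _ = (MvPolynomial.map e P * MvPolynomial.map e B) * Q := by ring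
        _ = (MvPolynomial.map e A * MvPolynomial.map e Q) * Q := by rw [h1]
        _ = MvPolynomial.map e A * Q * MvPolynomial.map e Q := by ring
    exact mul_right_cancel₀ hQe h2
  have hsub : ∀ B₁ B₂, D B₁ → D B₂ → B₁ - B₂ ≠ 0 → D (B₁ - B₂) := by
    rintro B₁ B₂ ⟨_, A₁, h₁⟩ ⟨_, A₂, h₂⟩ hne
    exact ⟨hne, A₁ - A₂, by rw [mul_sub, sub_mul, h₁, h₂]⟩
  have hex : ∃ n, ∃ B, D B ∧ B.support.card = n := ⟨Q.support.card, Q, hDQ, rfl⟩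
  set n := Nat.find hex with hn
  obtain ⟨B₀, hB₀, hcard⟩ := Nat.find_spec hex
  have hmin : ∀ B, D B → n ≤ B.support.card := by
    intro B hB
    by_contra hlt
    exact Nat.find_min hex (by omega) ⟨B, hB, rfl⟩
  obtain ⟨d₀, hd₀⟩ := (MvPolynomial.support_nonempty.mpr hB₀.1)
  have hc0 : B₀.coeff d₀ ≠ 0 := MvPolynomial.mem_support_iff.mp hd₀
  set c : K := (B₀.coeff d₀)⁻¹ with hc
  have hcne : c ≠ 0 := inv_ne_zero hc0
  set B : MvPolynomial σ K := c • B₀ with hBdef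
  have hBD : D B := by
    obtain ⟨hB0, A, hA⟩ := hB₀
    refine ⟨by simp [hBdef, smul_eq_zero, hcne, hB0], c • A, ?_⟩
    rw [mul_smul_comm, smul_mul_assoc, hA]
  have hBsupp : B.support = B₀.support := Finsupp.support_smul_eq hcne
  have hBcard : B.support.card = n := by rw [hBsupp, hcard]
  have hBd₀ : B.coeff d₀ = 1 := by
    simp [hBdef, MvPolynomial.coeff_smul, hc, inv_mul_cancel₀ hc0]
  have hesupp : (MvPolynomial.map e B).support = B.support := by
    ext d
    simp [MvPolynomial.mem_support_iff, MvPolynomial.coeff_map,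
      map_ne_zero_iff e e.injective]
  have hkey : MvPolynomial.map e B = B := by
    by_contra hne
    have hne' : MvPolynomial.map e B - B ≠ 0 := sub_ne_zero.mpr hne
    have hDdiff : D (MvPolynomial.map e B - B) := hsub _ _ (hstab B hBD) hBD hne'
    have hsub_supp : (MvPolynomial.map e B - B).support ⊆ B.support.erase d₀ := by
      intro d hd
      rw [Finset.mem_erase]
      have hd' : (MvPolynomial.map e B - B).coeff d ≠ 0 :=
        MvPolynomial.mem_support_iff.mp hd
      constructor
      · rintro rfl
        apply hd'
        simp [MvPolynomial.coeff_sub, MvPolynomial.coeff_map, hBd₀]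
      · by_contra hds
        apply hd'
        have : B.coeff d = 0 := MvPolynomial.notMem_support_iff.mp hds
        simp [MvPolynomial.coeff_sub, MvPolynomial.coeff_map, this]
    have hlt : (MvPolynomial.map e B - B).support.card < n := by
      calc (MvPolynomial.map e B - B).support.card
          ≤ (B.support.erase d₀).card := Finset.card_le_card hsub_supp
        _ < B.support.card := Finset.card_erase_lt_of_mem (hBsupp ▸ hd₀)
        _ = n := hBcard
    exact absurd (hmin _ hDdiff) (by omega)
  obtain ⟨hB0, A, hA⟩ := hBD
  have hQQe : Q * MvPolynomial.map e Q ≠ 0 := mul_ne_zero hQ hQe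
  have hAfix : MvPolynomial.map e A = A := by
    have h1 : (MvPolynomial.map e P) * B = (MvPolynomial.map e A) * (MvPolynomial.map e Q) := by
      have := congrArg (MvPolynomial.map e) hA
      rw [map_mul, map_mul, hkey] at this
      exact this
    have h2 : MvPolynomial.map e A * (Q * MvPolynomial.map e Q)
        = A * (Q * MvPolynomial.map e Q) := by
      calc MvPolynomial.map e A * (Q * MvPolynomial.map e Q)
          = (MvPolynomial.map e A * MvPolynomial.map e Q) * Q := by ring
        _ = (MvPolynomial.map e P * B) * Q := by rw [h1]
        _ = (MvPolynomial.map e P * Q) * B := by ring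
        _ = (P * MvPolynomial.map e Q) * B := by rw [hrel]
        _ = (P * B) * MvPolynomial.map e Q := by ring
        _ = (A * Q) * MvPolynomial.map e Q := by rw [hA]
        _ = A * (Q * MvPolynomial.map e Q) := by ring
    exact mul_right_cancel₀ hQQe h2
  exact ⟨A, B, hAfix, hkey, hB0, hA⟩

end Helpers

/-- The fixed points of `τ` on `C_{s,∞}` are exactly `k_s = 𝔽_q(t₁, …, t_s)`. -/
theorem stmt4 {s q : ℕ} (hq : 1 < q)
    {Cinf Cs : Type*} [NormedField Cinf] [CompleteSpace Cinf] [NormedField Cs]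
    [CompleteSpace Cs] [IsUltrametricDist Cs]
    (halg : IsAlgClosed Cinf)
    (ι : MvPolynomial (Fin s) Cinf →+* Cs)
    (hGauss : ∀ f : MvPolynomial (Fin s) Cinf,
      ‖ι f‖ = ⨆ d : Fin s →₀ ℕ, ‖MvPolynomial.coeff d f‖)
    (hdense : DenseRange fun fg : MvPolynomial (Fin s) Cinf × MvPolynomial (Fin s) Cinf =>
      ι fg.1 / ι fg.2)
    (τ : Cs →+* Cs) (hτcont : Continuous τ)
    (hτnorm : ∀ x : Cs, ‖τ x‖ = ‖x‖ ^ q)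
    (hτX : ∀ i : Fin s, τ (ι (MvPolynomial.X i)) = ι (MvPolynomial.X i))
    (hτC : ∀ c : Cinf, τ (ι (MvPolynomial.C c)) = ι (MvPolynomial.C (c ^ q))) :
    ∀ x : Cs, τ x = x ↔
      ∃ f g : MvPolynomial (Fin s) Cinf,
        (∀ d, MvPolynomial.coeff d f ^ q = MvPolynomial.coeff d f) ∧
        (∀ d, MvPolynomial.coeff d g ^ q = MvPolynomial.coeff d g) ∧
        ι g ≠ 0 ∧ x = ι f / ι g := by
  classical
  have hq0 : q ≠ 0 := by omega
  -- ultrametric on Cs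
  have hnaS : ∀ a b : Cs, ‖a + b‖ ≤ max ‖a‖ ‖b‖ := fun a b =>
    IsUltrametricDist.norm_add_le_max a b
  have hnaS' : ∀ a b : Cs, ‖a - b‖ ≤ max ‖a‖ ‖b‖ := by
    intro a b
    rw [sub_eq_add_neg]
    simpa using hnaS a (-b)
  -- the norm of constants
  have hCnorm : ∀ c : Cinf, ‖ι (C c)‖ = ‖c‖ := by
    intro c
    rw [hGauss]
    apply le_antisymm
    · apply gsup_le
      intro d
      rw [MvPolynomial.coeff_C]
      split_ifs <;> simp
    · have := le_gsup (s := s) (C c) 0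
      simpa [MvPolynomial.coeff_C] using this
  -- `ι` is injective
  have hι0 : ∀ f : MvPolynomial (Fin s) Cinf, ι f = 0 → f = 0 := by
    intro f h0
    have hn : ‖ι f‖ = 0 := by rw [h0, norm_zero]
    ext d
    have := (le_gsup f d).trans_eq ((hGauss f).symm.trans hn)
    simpa using le_antisymm this (norm_nonneg _)
  have hιinj : Function.Injective ι := by
    intro a b hab
    have : a - b = 0 := hι0 _ (by rw [map_sub, hab, sub_self])
    linear_combination this
  -- the ultrametric inequality on Cinf, transported via ι ∘ C
  have hnaC : ∀ a b : Cinf, ‖a + b‖ ≤ max ‖a‖ ‖b‖ := by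
    intro a b
    have := hnaS (ι (C a)) (ι (C b))
    rw [← map_add, ← MvPolynomial.C_add, hCnorm, hCnorm, hCnorm] at this
    exact this
  -- the q-power map is a ring endomorphism of Cinf
  have hφadd : ∀ a b : Cinf, (a + b) ^ q = a ^ q + b ^ q := by
    intro a b
    apply MvPolynomial.C_injective (Fin s) Cinf
    apply hιinj
    have h1 := hτC (a + b)
    rw [MvPolynomial.C_add, map_add, map_add τ, hτC, hτC, ← map_add, ← MvPolynomial.C_add] at h1
    exact h1.symm
  set φ : Cinf →+* Cinf :=
    { toFun := fun c => c ^ q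
      map_one' := one_pow q
      map_mul' := fun a b => mul_pow a b q
      map_zero' := zero_pow hq0
      map_add' := hφadd } with hφdef
  have hφ : ∀ c : Cinf, φ c = c ^ q := fun _ => rfl
  -- τ on polynomials is coefficientwise φ
  have hτι : ∀ f : MvPolynomial (Fin s) Cinf, τ (ι f) = ι (MvPolynomial.map φ f) := by
    intro f
    induction f using MvPolynomial.induction_on with
    | C c => rw [hτC, MvPolynomial.map_C, hφ]
    | add p p' ihp ihp' => rw [map_add, map_add, map_add, map_add, ihp, ihp']
    | mul_X p i ih => rw [map_mul, map_mul, map_mul, map_mul, ih, hτX, MvPolynomial.map_X]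
  -- norms of τ-fixed elements
  have hfixnorm : ∀ y : Cs, τ y = y → ‖y‖ = 0 ∨ ‖y‖ = 1 := by
    intro y hy
    have := hτnorm y
    rw [hy] at this
    exact realFix hq (norm_nonneg y) this.symm
  intro x
  constructor
  · -- the hard direction
    intro hx
    by_cases hx0 : x = 0
    · refine ⟨0, 1, by simp [zero_pow hq0], ?_, by simp, by simp [hx0]⟩
      intro d
      rw [MvPolynomial.coeff_one]
      split_ifs <;> simp [zero_pow hq0]
    · have hx1 : ‖x‖ = 1 := (hfixnorm x hx).resolve_left (by
        simpa using (norm_ne_zero_iff.mpr hx0))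
      obtain ⟨⟨f₀, g₀⟩, hdist⟩ := hdense.exists_dist_lt x (by norm_num : (0:ℝ) < 1/2)
      rw [dist_eq_norm] at hdist
      have hg₀ : ι g₀ ≠ 0 := by
        intro h0
        rw [h0, div_zero, sub_zero, hx1] at hdist
        norm_num at hdist
      have hg₀ne : g₀ ≠ 0 := by
        intro h0; apply hg₀; rw [h0, map_zero]
      obtain ⟨dg, hdg, hdgeq⟩ := gsup_attain hg₀ne
      set c := g₀.coeff dg with hcdef
      have hc : c ≠ 0 := MvPolynomial.mem_support_iff.mp hdg
      have hcn : ‖c‖ ≠ 0 := norm_ne_zero_iff.mpr hc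
      set f : MvPolynomial (Fin s) Cinf := C c⁻¹ * f₀ with hfdef
      set g : MvPolynomial (Fin s) Cinf := C c⁻¹ * g₀ with hgdef
      have hCcne : ι (C (c⁻¹ : Cinf)) ≠ 0 := by
        rw [← norm_ne_zero_iff, hCnorm, norm_inv]
        simpa using hcn
      have hgne : ι g ≠ 0 := by
        rw [hgdef, map_mul]
        exact mul_ne_zero hCcne hg₀
      have hgnorm : ‖ι g‖ = 1 := by
        rw [hgdef, map_mul, norm_mul, hCnorm, norm_inv, hGauss g₀, hdgeq]
        exact inv_mul_cancel₀ hcn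
      have hfrac : ι f / ι g = ι f₀ / ι g₀ := by
        rw [hfdef, hgdef, map_mul, map_mul]
        exact mul_div_mul_left _ _ hCcne
      have hgdg0 : g.coeff dg = 1 := by
        rw [hgdef, MvPolynomial.coeff_C_mul]
        exact inv_mul_cancel₀ hc
      clear_value f g
      clear hfdef hgdef
      set h : Cs := ι f / ι g with hhdef

      have hxh : ‖x - h‖ < 1/2 := by rw [hfrac]; exact hdist
      have hxh1 : ‖x - h‖ < 1 := hxh.trans (by norm_num)
      have hhx1 : ‖h - x‖ < 1 := by rw [norm_sub_rev]; exact hxh1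
      have hhnorm : ‖h‖ = 1 := by
        have hle : ‖h‖ ≤ 1 := by
          have : ‖x - (x - h)‖ ≤ max ‖x‖ ‖x - h‖ := hnaS' x (x - h)
          simpa [hx1, max_le_iff, le_of_lt hxh1] using this
        rcases lt_or_eq_of_le hle with hlt | heq
        · exfalso
          have : ‖x - h + h‖ ≤ max ‖x - h‖ ‖h‖ := hnaS (x - h) h
          rw [sub_add_cancel, hx1] at this
          rcases max_cases ‖x - h‖ ‖h‖ with ⟨he, _⟩ | ⟨he, _⟩ <;> rw [he] at this <;> linarith
        · exact heq
      have hfnorm : ‖ι f‖ = 1 := by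
        have : ι f = h * ι g := (div_mul_cancel₀ _ hgne).symm
        rw [this, norm_mul, hhnorm, hgnorm, one_mul]
      -- τ h is close to h
      have hτh : ‖τ h - h‖ < 1 := by
        have he : τ h - h = τ (h - x) - (h - x) := by
          rw [map_sub, hx]; ring
        have h2 : ‖τ (h - x)‖ < 1 := by
          rw [hτnorm]
          exact pow_lt_one₀ (norm_nonneg _) hhx1 hq0
        rw [he]
        exact lt_of_le_of_lt (hnaS' _ _) (max_lt h2 hhx1)
      have hφgnorm : ‖ι (MvPolynomial.map φ g)‖ = 1 := by
        rw [← hτι, hτnorm, hgnorm, one_pow]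
      have hφgne : ι (MvPolynomial.map φ g) ≠ 0 := by
        rw [← norm_ne_zero_iff, hφgnorm]; norm_num
      set w : MvPolynomial (Fin s) Cinf :=
        MvPolynomial.map φ f * g - f * MvPolynomial.map φ g with hwdef
      have hwnorm : ‖ι w‖ < 1 := by
        have hτheq : τ h = ι (MvPolynomial.map φ f) / ι (MvPolynomial.map φ g) := by
          rw [hhdef, map_div₀, hτι, hτι]
        have key : ∀ A B C' D : Cs, B ≠ 0 → D ≠ 0 →
            A * D - C' * B = (A / B - C' / D) * (B * D) := by
          intro A B C' D hB hD
          field_simp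
        have hcalc : ι w = (τ h - h) * (ι (MvPolynomial.map φ g) * ι g) := by
          have hA : ι w = ι (MvPolynomial.map φ f) * ι g - ι f * ι (MvPolynomial.map φ g) := by
            rw [hwdef, map_sub, map_mul, map_mul]
          rw [hA, hτheq, hhdef]
          exact key _ _ _ _ hφgne hgne
        rw [hcalc, norm_mul, norm_mul, hφgnorm, hgnorm]
        simpa using hτh
      -- the integral model
      set O := Oball hnaC with hOdef
      set m := mball hnaC with hmdef
      haveI hmax : m.IsMaximal := mball_isMaximal hnaC
      letI : Field (O ⧸ m) := Ideal.Quotient.field m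
      set π : O →+* O ⧸ m := Ideal.Quotient.mk m with hπdef
      have hφO_mem : ∀ a : O, (a : Cinf) ^ q ∈ O := by
        intro a
        show ‖(a : Cinf) ^ q‖ ≤ 1
        rw [norm_pow]
        exact pow_le_one₀ (norm_nonneg _) a.2
      set φO : O →+* O :=
        { toFun := fun a => ⟨(a : Cinf) ^ q, hφO_mem a⟩
          map_one' := by ext; simp
          map_mul' := by intro a b; ext; simp [mul_pow]
          map_zero' := by ext; simp [zero_pow hq0]
          map_add' := by intro a b; ext; exact hφadd a b } with hφOdef
      have hφOc : ∀ a : O, (φO a : Cinf) = (a : Cinf) ^ q := fun _ => rfl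
      have hm_iff : ∀ a : O, a ∈ m ↔ ‖(a : Cinf)‖ < 1 := fun _ => Iff.rfl
      set φk : O ⧸ m →+* O ⧸ m :=
        Ideal.Quotient.lift m (π.comp φO) (by
          intro a ha
          rw [RingHom.comp_apply, hπdef, Ideal.Quotient.eq_zero_iff_mem]
          show ‖(φO a : Cinf)‖ < 1
          rw [hφOc]
          calc ‖(a : Cinf) ^ q‖ = ‖(a : Cinf)‖ ^ q := norm_pow _ q
            _ < 1 := pow_lt_one₀ (norm_nonneg _) ha hq0) with hφkdef
      have hπφ : ∀ a : O, φk (π a) = π (φO a) := by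
        intro a
        exact Ideal.Quotient.lift_mk m _ _
      -- polynomial maps
      set u : MvPolynomial (Fin s) O →+* MvPolynomial (Fin s) Cinf :=
        MvPolynomial.map (SubringClass.subtype O) with hudef
      set red : MvPolynomial (Fin s) O →+* MvPolynomial (Fin s) (O ⧸ m) :=
        MvPolynomial.map π with hreddef
      have hucoeff : ∀ (F : MvPolynomial (Fin s) O) (d),
          MvPolynomial.coeff d (u F) = ((MvPolynomial.coeff d F : O) : Cinf) := by
        intro F d
        rw [hudef, MvPolynomial.coeff_map]
        rfl
      have hredcoeff : ∀ (F : MvPolynomial (Fin s) O) (d),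
          MvPolynomial.coeff d (red F) = π (MvPolynomial.coeff d F) := by
        intro F d
        rw [hreddef, MvPolynomial.coeff_map]
      -- lifting bounded polynomials to the integral model
      have hliftO : ∀ f' : MvPolynomial (Fin s) Cinf, (∀ d, ‖f'.coeff d‖ ≤ 1) →
          ∃ F, u F = f' := by
        intro f' hb
        refine ⟨∑ d ∈ f'.support, monomial d (⟨f'.coeff d, hb d⟩ : O), ?_⟩
        rw [map_sum]
        have : ∀ d ∈ f'.support,
            u (monomial d (⟨f'.coeff d, hb d⟩ : O)) = monomial d (f'.coeff d) := by
          intro d _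
          rw [hudef, MvPolynomial.map_monomial]
          rfl
        rw [Finset.sum_congr rfl this]
        exact MvPolynomial.support_sum_monomial_coeff f'
      -- coefficient bounds for f and g
      have hfb : ∀ d, ‖f.coeff d‖ ≤ 1 := by
        intro d
        have := le_gsup f d
        rw [← hGauss, hfnorm] at this
        exact this
      have hgb : ∀ d, ‖g.coeff d‖ ≤ 1 := by
        intro d
        have := le_gsup g d
        rw [← hGauss, hgnorm] at this
        exact this
      obtain ⟨F, hF⟩ := hliftO f hfb
      obtain ⟨G, hG⟩ := hliftO g hgb
      -- commuting the maps
      have hφcomm : ∀ Z : MvPolynomial (Fin s) O,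
          u (MvPolynomial.map φO Z) = MvPolynomial.map φ (u Z) := by
        intro Z
        rw [hudef, MvPolynomial.map_map, MvPolynomial.map_map]
        congr 1
      have hredcomm : ∀ Z : MvPolynomial (Fin s) O,
          red (MvPolynomial.map φO Z) = MvPolynomial.map φk (red Z) := by
        intro Z
        rw [hreddef, MvPolynomial.map_map, MvPolynomial.map_map]
        congr 1
      -- smallness criteria
      have hlt1 : ∀ f' : MvPolynomial (Fin s) Cinf, (∀ d, ‖f'.coeff d‖ < 1) → ‖ι f'‖ < 1 := by
        intro f' hsm
        by_cases hf' : f' = 0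
        · rw [hf', map_zero, norm_zero]; norm_num
        · obtain ⟨d, _, hd⟩ := gsup_attain hf'
          rw [hGauss, hd]
          exact hsm d
      have hlt1' : ∀ f' : MvPolynomial (Fin s) Cinf, ‖ι f'‖ < 1 → ∀ d, ‖f'.coeff d‖ < 1 := by
        intro f' hsm d
        exact lt_of_le_of_lt ((le_gsup f' d).trans_eq (hGauss f').symm) hsm
      -- the relation modulo m
      have hrelk : MvPolynomial.map φk (red F) * red G
          = red F * MvPolynomial.map φk (red G) := by
        have hWsmall : ∀ d, ‖(u (MvPolynomial.map φO F * G - F * MvPolynomial.map φO G)).coeff d‖ < 1 := by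
          have hueq : u (MvPolynomial.map φO F * G - F * MvPolynomial.map φO G) = w := by
            rw [map_sub, map_mul, map_mul, hφcomm, hφcomm, hF, hG, hwdef]
          rw [hueq]
          exact hlt1' w hwnorm
        have hred0 : red (MvPolynomial.map φO F * G - F * MvPolynomial.map φO G) = 0 := by
          apply MvPolynomial.ext
          intro d
          rw [hredcoeff, MvPolynomial.coeff_zero, hπdef, Ideal.Quotient.eq_zero_iff_mem]
          have := hWsmall d
          rw [hucoeff] at this
          exact this
        have hsub0 : red (MvPolynomial.map φO F * G) - red (F * MvPolynomial.map φO G) = 0 := by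
          rw [← map_sub]; exact hred0
        have h2 := sub_eq_zero.mp hsub0
        rw [map_mul, map_mul, hredcomm, hredcomm] at h2
        exact h2
      have hGred : red G ≠ 0 := by
        intro h0
        have hgdg : g.coeff dg = 1 := hgdg0
        have h1 : π (G.coeff dg) = 0 := by
          rw [← hredcoeff, h0, MvPolynomial.coeff_zero]
        rw [hπdef, Ideal.Quotient.eq_zero_iff_mem] at h1
        have h2 : ‖((MvPolynomial.coeff dg G : O) : Cinf)‖ < 1 := h1
        rw [← hucoeff, hG, hgdg] at h2
        simp at h2
      -- apply the descent lemma
      obtain ⟨P', Q', hP'fix, hQ'fix, hQ'ne, hPQ⟩ := fixedRat φk (red F) (red G) hGred hrelk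
      -- lift fixed residues to actual q-power-fixed elements
      have hliftk : ∀ y : O ⧸ m, φk y = y →
          ∃ a : O, (a : Cinf) ^ q = (a : Cinf) ∧ π a = y := by
        intro y hy
        obtain ⟨b, rfl⟩ := Ideal.Quotient.mk_surjective (I := m) y
        have hππ : φk (π b) = π b := hy
        rw [hπφ] at hππ
        have hm' : φO b - b ∈ m := Ideal.Quotient.eq.mp hππ
        have hsm : ‖(b : Cinf) ^ q - (b : Cinf)‖ < 1 := hm'
        obtain ⟨c', hc'q, hc'lt⟩ := liftFq halg hq (b : Cinf) hsm
        have hc'n : ‖c'‖ ^ q = ‖c'‖ := by rw [← norm_pow, hc'q]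
        have hc'le : ‖c'‖ ≤ 1 := by
          rcases realFix hq (norm_nonneg c') hc'n with h' | h' <;> rw [h']
          · norm_num
        refine ⟨⟨c', hc'le⟩, hc'q, ?_⟩
        rw [hπdef]
        apply (Ideal.Quotient.eq (I := m)).mpr
        show ‖((((⟨c', hc'le⟩ : O) - b : O)) : Cinf)‖ < 1
        have : (((⟨c', hc'le⟩ : O) - b : O) : Cinf) = c' - (b : Cinf) := rfl
        rw [this, norm_sub_rev]
        exact hc'lt
      -- lift fixed polynomials
      have hliftpoly : ∀ Z : MvPolynomial (Fin s) (O ⧸ m), MvPolynomial.map φk Z = Z →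
          ∃ z : MvPolynomial (Fin s) O, red z = Z ∧
            ∀ d, ((u z).coeff d) ^ q = (u z).coeff d := by
        intro Z hZ
        have hfixc : ∀ d, φk (Z.coeff d) = Z.coeff d := by
          intro d
          conv_rhs => rw [← hZ]
          rw [MvPolynomial.coeff_map]
        choose a haq haπ using fun d => hliftk (Z.coeff d) (hfixc d)
        refine ⟨∑ d ∈ Z.support, monomial d (a d), ?_, ?_⟩
        · apply MvPolynomial.ext
          intro d
          rw [hredcoeff, MvPolynomial.coeff_sum]
          simp only [MvPolynomial.coeff_monomial]
          rw [Finset.sum_ite_eq' Z.support d (fun e => a e)]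
          split_ifs with hds
          · exact haπ d
          · rw [map_zero]
            exact (MvPolynomial.notMem_support_iff.mp hds).symm
        · intro d
          rw [hucoeff, MvPolynomial.coeff_sum]
          simp only [MvPolynomial.coeff_monomial]
          rw [Finset.sum_ite_eq' Z.support d (fun e => a e)]
          split_ifs with hds
          · exact haq d
          · simp [zero_pow hq0]
      obtain ⟨pO, hpred, hpfixc⟩ := hliftpoly P' hP'fix
      obtain ⟨rO, hrred, hrfixc⟩ := hliftpoly Q' hQ'fix
      set p := u pO with hpdef
      set r := u rO with hrdef
      -- the norm of r is 1
      have hrb : ∀ d, ‖r.coeff d‖ ≤ 1 := by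
        intro d
        have := hrfixc d
        have hn : ‖r.coeff d‖ ^ q = ‖r.coeff d‖ := by rw [← norm_pow, this]
        rcases realFix hq (norm_nonneg _) hn with h' | h' <;> rw [h']
        · norm_num
      have hpb : ∀ d, ‖p.coeff d‖ ≤ 1 := by
        intro d
        have := hpfixc d
        have hn : ‖p.coeff d‖ ^ q = ‖p.coeff d‖ := by rw [← norm_pow, this]
        rcases realFix hq (norm_nonneg _) hn with h' | h' <;> rw [h']
        · norm_num
      have hrnorm : ‖ι r‖ = 1 := by
        apply le_antisymm
        · rw [hGauss]; exact gsup_le hrb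
        · obtain ⟨d, hd⟩ := MvPolynomial.support_nonempty.mpr hQ'ne
          have h1 : π (rO.coeff d) ≠ 0 := by
            rw [← hredcoeff, hrred]
            exact MvPolynomial.mem_support_iff.mp hd
          have h2 : ¬(‖((MvPolynomial.coeff d rO : O) : Cinf)‖ < 1) := by
            intro hlt
            exact h1 (by rw [hπdef, Ideal.Quotient.eq_zero_iff_mem]; exact hlt)
          have h3 : (1:ℝ) ≤ ‖r.coeff d‖ := by
            rw [hrdef, hucoeff]
            exact not_lt.mp h2
          exact h3.trans ((le_gsup r d).trans_eq (hGauss r).symm)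
      have hrι : ι r ≠ 0 := by
        rw [← norm_ne_zero_iff, hrnorm]; norm_num
      -- p and r are τ-fixed
      have hmapfix : ∀ z : MvPolynomial (Fin s) Cinf,
          (∀ d, z.coeff d ^ q = z.coeff d) → MvPolynomial.map φ z = z := by
        intro z hz
        apply MvPolynomial.ext
        intro d
        rw [MvPolynomial.coeff_map, hφ, hz d]
      have hpfix : τ (ι p) = ι p := by rw [hτι, hmapfix p hpfixc]
      have hrfix : τ (ι r) = ι r := by rw [hτι, hmapfix r hrfixc]
      -- the numerator f * r - p * g is small
      have hnum : ‖ι (f * r - p * g)‖ < 1 := by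
        apply hlt1
        intro d
        have hueq : u (F * rO - pO * G) = f * r - p * g := by
          rw [map_sub, map_mul, map_mul, hF, hG, ← hpdef, ← hrdef]
        have hred0 : red (F * rO - pO * G) = 0 := by
          rw [map_sub, map_mul, map_mul, hpred, hrred, hPQ, sub_self]
        have h1 : π ((F * rO - pO * G).coeff d) = 0 := by
          rw [← hredcoeff, hred0, MvPolynomial.coeff_zero]
        rw [hπdef, Ideal.Quotient.eq_zero_iff_mem] at h1
        have h2 : ‖((MvPolynomial.coeff d (F * rO - pO * G) : O) : Cinf)‖ < 1 := h1
        rw [← hucoeff, hueq] at h2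
        exact h2
      -- conclude
      set y := x - ι p / ι r with hydef
      have hyfix : τ y = y := by
        rw [hydef, map_sub, map_div₀, hpfix, hrfix, hx]
      have hy1 : ‖y‖ < 1 := by
        have hsplit : y = (x - h) + (h - ι p / ι r) := by rw [hydef]; ring
        have h2 : ‖h - ι p / ι r‖ < 1 := by
          have heq2 : h - ι p / ι r = ι (f * r - p * g) / (ι g * ι r) := by
            rw [hhdef, div_sub_div _ _ hgne hrι, map_sub, map_mul, map_mul]
            congr 1
            ring
          rw [heq2, norm_div, norm_mul, hgnorm, hrnorm]
          simpa using hnum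
        calc ‖y‖ ≤ max ‖x - h‖ ‖h - ι p / ι r‖ := by rw [hsplit]; exact hnaS _ _
          _ < 1 := max_lt hxh1 h2
      have hy0 : y = 0 := by
        rw [← norm_eq_zero]
        rcases hfixnorm y hyfix with h' | h'
        · exact h'
        · rw [h'] at hy1; norm_num at hy1
      have hxeq : x = ι p / ι r := by
        have := sub_eq_zero.mp (hydef ▸ hy0)
        exact this
      exact ⟨p, r, hpfixc, hrfixc, hrι, hxeq⟩
  · -- the easy direction
    rintro ⟨f, g, hf, hg, hgne, rfl⟩
    rw [map_div₀, hτι, hτι]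
    have hmapfix : ∀ z : MvPolynomial (Fin s) Cinf,
        (∀ d, z.coeff d ^ q = z.coeff d) → MvPolynomial.map φ z = z := by
      intro z hz
      apply MvPolynomial.ext
      intro d
      rw [MvPolynomial.coeff_map, hφ, hz d]
    rw [hmapfix f hf, hmapfix g hg]
end

section
/- The element t_1 does not belong to U_s: there exist no β ∈ C_∞^× and γ ∈ \bar F_q(t_1,…,t_s) with v_∞(t_1 − β·τ(γ)/γ) > 0; equivalently, there is no x ∈ C_{s,∞}^× with τ(x) = t_1·x. -/
open MvPolynomial IsUltrametricDist Finset

set_option linter.unusedSectionVars false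
namespace Stmt17Aux

variable {s q : ℕ} {Cinf Cs : Type*} [NormedField Cinf] [NormedField Cs] [IsUltrametricDist Cs]
  (ι : MvPolynomial (Fin (s + 1)) Cinf →+* Cs)
  (hGauss : ∀ f : MvPolynomial (Fin (s + 1)) Cinf,
      ‖ι f‖ = ⨆ d : Fin (s + 1) →₀ ℕ, ‖MvPolynomial.coeff d f‖)

lemma bdd (f : MvPolynomial (Fin (s + 1)) Cinf) :
    BddAbove (Set.range fun d => ‖MvPolynomial.coeff d f‖) := by
  apply BddAbove.mono (s := Set.range fun d => ‖MvPolynomial.coeff d f‖)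
    (t := ↑(insert (0:ℝ) (f.support.image fun d => ‖MvPolynomial.coeff d f‖)))
  · rintro x ⟨d, rfl⟩
    by_cases hd : d ∈ f.support
    · simp only [coe_insert, Set.mem_insert_iff, mem_coe, Finset.mem_image]
      exact Or.inr ⟨d, hd, rfl⟩
    · simp [MvPolynomial.notMem_support_iff.mp hd]
  · exact Finset.bddAbove _

include hGauss

lemma coeff_le (f : MvPolynomial (Fin (s + 1)) Cinf) (d) :
    ‖MvPolynomial.coeff d f‖ ≤ ‖ι f‖ := by
  rw [hGauss]; exact le_ciSup (bdd f) d

lemma inj : Function.Injective ι := by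
  rw [injective_iff_map_eq_zero]
  intro f hf
  ext d
  have := coeff_le ι hGauss f d
  rw [hf, norm_zero] at this
  simpa using le_antisymm this (norm_nonneg _)

lemma attain {f : MvPolynomial (Fin (s + 1)) Cinf} (hf : f ≠ 0) :
    ∃ d ∈ f.support, ‖MvPolynomial.coeff d f‖ = ‖ι f‖ := by
  obtain ⟨d, hd, hmax⟩ := f.support.exists_max_image (fun d => ‖MvPolynomial.coeff d f‖)
    (MvPolynomial.support_nonempty.mpr hf)
  refine ⟨d, hd, le_antisymm (coeff_le ι hGauss f d) ?_⟩
  rw [hGauss]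
  apply ciSup_le
  intro e
  by_cases he : e ∈ f.support
  · exact hmax e he
  · simp only [MvPolynomial.notMem_support_iff.mp he, norm_zero]
    exact norm_nonneg _

lemma norm_C (c : Cinf) : ‖ι (MvPolynomial.C c)‖ = ‖c‖ := by
  refine le_antisymm ?_ ?_
  · rw [hGauss]
    apply ciSup_le
    intro d
    rw [MvPolynomial.coeff_C]
    split_ifs <;> simp
  · have := coeff_le ι hGauss (MvPolynomial.C c) 0
    rwa [MvPolynomial.coeff_zero_C] at this

lemma norm_X (i : Fin (s + 1)) : ‖ι (MvPolynomial.X i)‖ = 1 := by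
  refine le_antisymm ?_ ?_
  · rw [hGauss]
    apply ciSup_le
    intro d
    rw [MvPolynomial.coeff_X']
    split_ifs <;> simp
  · have := coeff_le ι hGauss (MvPolynomial.X i) (Finsupp.single i 1)
    rwa [MvPolynomial.coeff_X, if_pos rfl, norm_one] at this

omit hGauss

/-- the part of `f` with `t₁`-degree exactly `k` -/
noncomputable def slice (k : ℕ) (f : MvPolynomial (Fin (s + 1)) Cinf) :
    MvPolynomial (Fin (s + 1)) Cinf :=
  AddMonoidAlgebra.ofCoeff (Finsupp.filter (fun d => d 0 = k) (AddMonoidAlgebra.coeff f))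

lemma coeff_slice (k : ℕ) (f : MvPolynomial (Fin (s + 1)) Cinf) (d) :
    MvPolynomial.coeff d (slice k f) = if d 0 = k then MvPolynomial.coeff d f else 0 :=
  Finsupp.filter_apply _ (AddMonoidAlgebra.coeff f) d

lemma slice_sub (k : ℕ) (f g : MvPolynomial (Fin (s + 1)) Cinf) :
    slice k (f - g) = slice k f - slice k g := by
  ext d
  simp only [coeff_slice, MvPolynomial.coeff_sub]
  split_ifs <;> simp

include hGauss

lemma norm_slice_le (k : ℕ) (f : MvPolynomial (Fin (s + 1)) Cinf) :
    ‖ι (slice k f)‖ ≤ ‖ι f‖ := by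
  rw [hGauss (slice k f)]
  apply ciSup_le
  intro d
  rw [coeff_slice]
  split_ifs
  · exact coeff_le ι hGauss f d
  · simpa using norm_nonneg (ι f)

omit hGauss

lemma slice_mul (k : ℕ) (f g : MvPolynomial (Fin (s + 1)) Cinf) :
    slice k (f * g) = ∑ p ∈ Finset.HasAntidiagonal.antidiagonal k, slice p.1 f * slice p.2 g := by
  ext d
  rw [coeff_slice, MvPolynomial.coeff_sum]
  simp only [MvPolynomial.coeff_mul, coeff_slice]
  rw [Finset.sum_comm]
  have key : ∀ x ∈ Finset.HasAntidiagonal.antidiagonal d,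
      (∑ p ∈ Finset.HasAntidiagonal.antidiagonal k,
        (if x.1 0 = p.1 then MvPolynomial.coeff x.1 f else 0) *
          (if x.2 0 = p.2 then MvPolynomial.coeff x.2 g else 0)) =
      (if d 0 = k then MvPolynomial.coeff x.1 f * MvPolynomial.coeff x.2 g else 0) := by
    intro x hx
    have hx' : x.1 + x.2 = d := Finset.HasAntidiagonal.mem_antidiagonal.mp hx
    have h0 : x.1 0 + x.2 0 = d 0 := by rw [← hx']; rfl
    have : ∀ p ∈ Finset.HasAntidiagonal.antidiagonal k,
        (if x.1 0 = p.1 then MvPolynomial.coeff x.1 f else 0) *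
          (if x.2 0 = p.2 then MvPolynomial.coeff x.2 g else 0) =
        (if p = (x.1 0, x.2 0) then
          MvPolynomial.coeff x.1 f * MvPolynomial.coeff x.2 g else 0) := by
      intro p _
      rcases p with ⟨p1, p2⟩
      simp only [Prod.mk.injEq]
      by_cases h1 : x.1 0 = p1
      · by_cases h2 : x.2 0 = p2
        · rw [if_pos h1, if_pos h2, if_pos ⟨h1.symm, h2.symm⟩]
        · rw [if_pos h1, if_neg h2,
            if_neg (show ¬(p1 = x.1 0 ∧ p2 = x.2 0) from fun hc => h2 hc.2.symm), mul_zero]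
      · rw [if_neg h1,
          if_neg (show ¬(p1 = x.1 0 ∧ p2 = x.2 0) from fun hc => h1 hc.1.symm), zero_mul]
    rw [Finset.sum_congr rfl this, Finset.sum_ite_eq' (Finset.HasAntidiagonal.antidiagonal k)]
    simp only [Finset.HasAntidiagonal.mem_antidiagonal, h0]
  rw [Finset.sum_congr rfl key]
  split_ifs with h
  · rfl
  · simp

include hGauss

lemma norm_pos {f : MvPolynomial (Fin (s + 1)) Cinf} (hf : f ≠ 0) : 0 < ‖ι f‖ :=
  norm_pos_iff.mpr fun h => hf (inj ι hGauss (by rw [h, map_zero]))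

omit hGauss

/-- the largest `t₁`-degree among the coefficients of maximal norm -/
noncomputable def mdeg (f : MvPolynomial (Fin (s + 1)) Cinf) : ℕ :=
  (f.support.filter fun d => ‖MvPolynomial.coeff d f‖ = ‖ι f‖).sup fun d => d 0

include hGauss

lemma mdeg_attain {f : MvPolynomial (Fin (s + 1)) Cinf} (hf : f ≠ 0) :
    ∃ d, d 0 = mdeg ι f ∧ ‖MvPolynomial.coeff d f‖ = ‖ι f‖ := by
  obtain ⟨d, hd, hdn⟩ := attain ι hGauss hf
  obtain ⟨e, he, hen⟩ := Finset.exists_mem_eq_sup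
    (f.support.filter fun d => ‖MvPolynomial.coeff d f‖ = ‖ι f‖)
    ⟨d, Finset.mem_filter.mpr ⟨hd, hdn⟩⟩ (fun d => d 0)
  exact ⟨e, hen.symm, (Finset.mem_filter.mp he).2⟩

lemma le_mdeg {f : MvPolynomial (Fin (s + 1)) Cinf} {d}
    (hd : MvPolynomial.coeff d f ≠ 0) (hdn : ‖MvPolynomial.coeff d f‖ = ‖ι f‖) :
    d 0 ≤ mdeg ι f :=
  Finset.le_sup (f := fun d => d 0)
    (Finset.mem_filter.mpr ⟨MvPolynomial.mem_support_iff.mpr hd, hdn⟩)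

lemma norm_slice_mdeg {f : MvPolynomial (Fin (s + 1)) Cinf} (hf : f ≠ 0) :
    ‖ι (slice (mdeg ι f) f)‖ = ‖ι f‖ := by
  obtain ⟨d, hd0, hdn⟩ := mdeg_attain ι hGauss hf
  refine le_antisymm (norm_slice_le ι hGauss _ f) ?_
  have := coeff_le ι hGauss (slice (mdeg ι f) f) d
  rwa [coeff_slice, if_pos hd0, hdn] at this

lemma norm_slice_lt {f : MvPolynomial (Fin (s + 1)) Cinf} (hf : f ≠ 0) {k : ℕ}
    (hk : mdeg ι f < k) : ‖ι (slice k f)‖ < ‖ι f‖ := by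
  by_cases h0 : slice k f = 0
  · rw [h0, map_zero, norm_zero]
    exact norm_pos ι hGauss hf
  · obtain ⟨d, hd, hdn⟩ := attain ι hGauss h0
    have hd' : MvPolynomial.coeff d (slice k f) ≠ 0 := MvPolynomial.mem_support_iff.mp hd
    rw [coeff_slice] at hd' hdn
    by_cases hdk : d 0 = k
    · rw [if_pos hdk] at hd' hdn
      rw [← hdn]
      refine lt_of_le_of_ne (coeff_le ι hGauss f d) fun hc => ?_
      exact absurd (le_mdeg ι hGauss hd' hc) (by omega)
    · rw [if_neg hdk] at hd'
      exact absurd rfl hd'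

lemma term_lt {f g : MvPolynomial (Fin (s + 1)) Cinf} (hf : f ≠ 0) (hg : g ≠ 0)
    {p : ℕ × ℕ} (hp : mdeg ι f < p.1 ∨ mdeg ι g < p.2) :
    ‖ι (slice p.1 f * slice p.2 g)‖ < ‖ι f‖ * ‖ι g‖ := by
  rw [map_mul, norm_mul]
  rcases hp with h | h
  · calc ‖ι (slice p.1 f)‖ * ‖ι (slice p.2 g)‖
        ≤ ‖ι (slice p.1 f)‖ * ‖ι g‖ :=
          mul_le_mul_of_nonneg_left (norm_slice_le ι hGauss _ g) (norm_nonneg _)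
      _ < ‖ι f‖ * ‖ι g‖ :=
          mul_lt_mul_of_pos_right (norm_slice_lt ι hGauss hf h) (norm_pos ι hGauss hg)
  · calc ‖ι (slice p.1 f)‖ * ‖ι (slice p.2 g)‖
        ≤ ‖ι f‖ * ‖ι (slice p.2 g)‖ :=
          mul_le_mul_of_nonneg_right (norm_slice_le ι hGauss _ f) (norm_nonneg _)
      _ < ‖ι f‖ * ‖ι g‖ :=
          mul_lt_mul_of_pos_left (norm_slice_lt ι hGauss hg h) (norm_pos ι hGauss hf)

lemma slice_mul_norm {f g : MvPolynomial (Fin (s + 1)) Cinf} (hf : f ≠ 0) (hg : g ≠ 0) :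
    ‖ι (slice (mdeg ι f + mdeg ι g) (f * g))‖ = ‖ι f‖ * ‖ι g‖ := by
  rw [slice_mul]
  have hmem : ((mdeg ι f, mdeg ι g) : ℕ × ℕ)
      ∈ Finset.HasAntidiagonal.antidiagonal (mdeg ι f + mdeg ι g) := by simp
  rw [← Finset.add_sum_erase _ _ hmem, map_add]
  have hterm : ‖ι (slice (mdeg ι f) f * slice (mdeg ι g) g)‖ = ‖ι f‖ * ‖ι g‖ := by
    rw [map_mul, norm_mul, norm_slice_mdeg ι hGauss hf, norm_slice_mdeg ι hGauss hg]
  have hrest : ‖ι (∑ p ∈ (Finset.HasAntidiagonal.antidiagonal (mdeg ι f + mdeg ι g)).erase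
      (mdeg ι f, mdeg ι g), slice p.1 f * slice p.2 g)‖ < ‖ι f‖ * ‖ι g‖ := by
    rw [map_sum]
    rcases Finset.eq_empty_or_nonempty ((Finset.HasAntidiagonal.antidiagonal (mdeg ι f + mdeg ι g)).erase
      (mdeg ι f, mdeg ι g)) with he | he
    · rw [he]
      simpa using mul_pos (norm_pos ι hGauss hf) (norm_pos ι hGauss hg)
    · refine lt_of_le_of_lt (he.norm_sum_le_sup'_norm _) ?_
      rw [Finset.sup'_lt_iff]
      intro p hp
      have hp1 := Finset.mem_erase.mp hp
      have hsum : p.1 + p.2 = mdeg ι f + mdeg ι g := Finset.HasAntidiagonal.mem_antidiagonal.mp hp1.2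
      have hne : p.1 ≠ mdeg ι f ∨ p.2 ≠ mdeg ι g := by
        by_contra hc
        push_neg at hc
        exact hp1.1 (Prod.ext hc.1 hc.2)
      exact term_lt ι hGauss hf hg (by omega)
  rw [norm_add_eq_max_of_norm_ne_norm (by rw [hterm]; exact fun h => absurd h.symm hrest.ne),
    hterm, max_eq_left (le_of_lt (hterm ▸ hrest))]

lemma slice_mul_lt {f g : MvPolynomial (Fin (s + 1)) Cinf} (hf : f ≠ 0) (hg : g ≠ 0)
    {k : ℕ} (hk : mdeg ι f + mdeg ι g < k) :
    ‖ι (slice k (f * g))‖ < ‖ι f‖ * ‖ι g‖ := by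
  rw [slice_mul, map_sum]
  rcases Finset.eq_empty_or_nonempty (Finset.HasAntidiagonal.antidiagonal k) with he | he
  · rw [he]
    simpa using mul_pos (norm_pos ι hGauss hf) (norm_pos ι hGauss hg)
  · refine lt_of_le_of_lt (he.norm_sum_le_sup'_norm _) ?_
    rw [Finset.sup'_lt_iff]
    intro p hp
    have hsum : p.1 + p.2 = k := Finset.HasAntidiagonal.mem_antidiagonal.mp hp
    exact term_lt ι hGauss hf hg (by omega)

lemma mdeg_mul {f g : MvPolynomial (Fin (s + 1)) Cinf} (hf : f ≠ 0) (hg : g ≠ 0) :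
    mdeg ι (f * g) = mdeg ι f + mdeg ι g := by
  have hfg : f * g ≠ 0 := mul_ne_zero hf hg
  have hN : ‖ι (f * g)‖ = ‖ι f‖ * ‖ι g‖ := by rw [map_mul, norm_mul]
  rcases lt_trichotomy (mdeg ι (f * g)) (mdeg ι f + mdeg ι g) with h | h | h
  · have h1 := slice_mul_norm ι hGauss hf hg
    have h2 := norm_slice_lt ι hGauss hfg h
    rw [h1, hN] at h2
    exact absurd h2 (lt_irrefl _)
  · exact h
  · have h1 := norm_slice_mdeg ι hGauss hfg
    have h2 := slice_mul_lt ι hGauss hf hg h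
    rw [h1, hN] at h2
    exact absurd h2 (lt_irrefl _)

lemma mdeg_C {β : Cinf} : mdeg ι (MvPolynomial.C β) = 0 := by
  refine Nat.le_antisymm ?_ (Nat.zero_le _)
  apply Finset.sup_le
  intro d hd
  have hd0 : MvPolynomial.coeff d (MvPolynomial.C β) ≠ 0 :=
    MvPolynomial.mem_support_iff.mp (Finset.mem_filter.mp hd).1
  rw [MvPolynomial.coeff_C] at hd0
  by_cases h : (0 : Fin (s + 1) →₀ ℕ) = d
  · simp [← h]
  · rw [if_neg h] at hd0
    exact absurd rfl hd0

lemma mdeg_X : mdeg ι (MvPolynomial.X (0 : Fin (s + 1)) : MvPolynomial (Fin (s + 1)) Cinf) = 1 := by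
  have hfilter : ((MvPolynomial.X (0 : Fin (s + 1)) : MvPolynomial (Fin (s + 1)) Cinf).support.filter
      fun d => ‖MvPolynomial.coeff d (MvPolynomial.X (0 : Fin (s + 1)) :
        MvPolynomial (Fin (s + 1)) Cinf)‖ = ‖ι (MvPolynomial.X 0)‖) = {Finsupp.single 0 1} := by
    rw [MvPolynomial.support_X, Finset.filter_singleton,
      if_pos (by rw [MvPolynomial.coeff_X, if_pos rfl, norm_X ι hGauss, norm_one])]
  rw [mdeg, hfilter]
  simp

omit hGauss

lemma norm_sub_eq_max {x y : Cs} (h : ‖x‖ ≠ ‖y‖) : ‖x - y‖ = max ‖x‖ ‖y‖ := by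
  rw [sub_eq_add_neg, norm_add_eq_max_of_norm_ne_norm (by rwa [norm_neg]), norm_neg]

include hGauss

lemma norm_map (hq0 : q ≠ 0) (φ : Cinf →+* Cinf) (hφ : ∀ c, ‖φ c‖ = ‖c‖ ^ q)
    (f : MvPolynomial (Fin (s + 1)) Cinf) :
    ‖ι (MvPolynomial.map φ f)‖ = ‖ι f‖ ^ q := by
  refine le_antisymm ?_ ?_
  · rw [hGauss (MvPolynomial.map φ f)]
    apply ciSup_le
    intro d
    rw [MvPolynomial.coeff_map, hφ]
    exact pow_le_pow_left₀ (norm_nonneg _) (coeff_le ι hGauss f d) q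
  · by_cases hf : f = 0
    · simp [hf, zero_pow hq0]
    · obtain ⟨d, hd, hdn⟩ := attain ι hGauss hf
      calc ‖ι f‖ ^ q = ‖φ (MvPolynomial.coeff d f)‖ := by rw [hφ, hdn]
        _ = ‖MvPolynomial.coeff d (MvPolynomial.map φ f)‖ := by
            rw [MvPolynomial.coeff_map]
        _ ≤ _ := coeff_le ι hGauss _ d

lemma mdeg_map (hq0 : q ≠ 0) (φ : Cinf →+* Cinf) (hφ : ∀ c, ‖φ c‖ = ‖c‖ ^ q)
    (hφi : Function.Injective φ) (f : MvPolynomial (Fin (s + 1)) Cinf) :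
    mdeg ι (MvPolynomial.map φ f) = mdeg ι f := by
  have hset : ((MvPolynomial.map φ f).support.filter
        fun d => ‖MvPolynomial.coeff d (MvPolynomial.map φ f)‖ = ‖ι (MvPolynomial.map φ f)‖)
      = f.support.filter fun d => ‖MvPolynomial.coeff d f‖ = ‖ι f‖ := by
    ext d
    simp only [Finset.mem_filter, MvPolynomial.mem_support_iff, MvPolynomial.coeff_map,
      norm_map ι hGauss hq0 φ hφ, hφ]
    constructor
    · rintro ⟨h1, h2⟩
      exact ⟨fun hc => h1 (by rw [hc, map_zero]),
        (pow_left_inj₀ (norm_nonneg _) (norm_nonneg _) hq0).mp h2⟩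
    · rintro ⟨h1, h2⟩
      exact ⟨fun hc => h1 (hφi (by rw [hc, map_zero])), by rw [h2]⟩
  rw [mdeg, hset, mdeg]

lemma main_ineq (hq0 : q ≠ 0) (φ : Cinf →+* Cinf) (hφ : ∀ c, ‖φ c‖ = ‖c‖ ^ q)
    (hφi : Function.Injective φ) (β : Cinf) {g h : MvPolynomial (Fin (s + 1)) Cinf}
    (hg : g ≠ 0) (hh : h ≠ 0) :
    ‖ι g‖ * ‖ι h‖ ^ q ≤
      ‖ι (MvPolynomial.X 0 * (g * MvPolynomial.map φ h)
        - MvPolynomial.C β * (MvPolynomial.map φ g * h))‖ := by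
  have hmapinj : Function.Injective (MvPolynomial.map (σ := Fin (s + 1)) φ) :=
    MvPolynomial.map_injective φ hφi
  have hg' : MvPolynomial.map φ g ≠ 0 := fun hc => hg (hmapinj (by rw [hc, map_zero]))
  have hh' : MvPolynomial.map φ h ≠ 0 := fun hc => hh (hmapinj (by rw [hc, map_zero]))
  set P := MvPolynomial.X (0 : Fin (s + 1)) * (g * MvPolynomial.map φ h) with hPdef
  set Q := MvPolynomial.C β * (MvPolynomial.map φ g * h) with hQdef
  have hX0 : (MvPolynomial.X (0 : Fin (s + 1)) : MvPolynomial (Fin (s + 1)) Cinf) ≠ 0 :=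
    MvPolynomial.X_ne_zero 0
  have hP : P ≠ 0 := mul_ne_zero hX0 (mul_ne_zero hg hh')
  have hNP : ‖ι P‖ = ‖ι g‖ * ‖ι h‖ ^ q := by
    rw [hPdef, map_mul, map_mul, norm_mul, norm_mul, norm_X ι hGauss, one_mul,
      norm_map ι hGauss hq0 φ hφ]
  by_cases hβ : β = 0
  · rw [hQdef, hβ, map_zero, zero_mul, sub_zero, hNP]
  · have hQ : Q ≠ 0 := mul_ne_zero (fun hc => hβ (by simpa using hc)) (mul_ne_zero hg' hh)
    rcases le_or_gt ‖ι Q‖ ‖ι P‖ with hle | hlt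
    · have hmP : mdeg ι P = 1 + (mdeg ι g + mdeg ι h) := by
        rw [hPdef, mdeg_mul ι hGauss hX0 (mul_ne_zero hg hh'), mdeg_X ι hGauss,
          mdeg_mul ι hGauss hg hh', mdeg_map ι hGauss hq0 φ hφ hφi]
      have hmQ : mdeg ι Q < 1 + (mdeg ι g + mdeg ι h) := by
        rw [hQdef, mdeg_mul ι hGauss (fun hc => hβ (by simpa using hc))
            (mul_ne_zero hg' hh),
          mdeg_C ι hGauss, mdeg_mul ι hGauss hg' hh, mdeg_map ι hGauss hq0 φ hφ hφi]
        omega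
      set M := 1 + (mdeg ι g + mdeg ι h)
      have h1 : ‖ι (slice M P)‖ = ‖ι P‖ := by
        rw [← hmP]; exact norm_slice_mdeg ι hGauss hP
      have h2 : ‖ι (slice M Q)‖ < ‖ι P‖ :=
        lt_of_lt_of_le (lt_of_lt_of_le (norm_slice_lt ι hGauss hQ hmQ) hle) le_rfl
      calc ‖ι g‖ * ‖ι h‖ ^ q = ‖ι P‖ := hNP.symm
        _ = max ‖ι (slice M P)‖ ‖ι (slice M Q)‖ := by
            rw [h1, max_eq_left (le_of_lt (h1.symm ▸ h2))]
        _ = ‖ι (slice M P) - ι (slice M Q)‖ := (norm_sub_eq_max (by rw [h1]; exact fun hc => absurd hc.symm h2.ne)).symm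
        _ = ‖ι (slice M (P - Q))‖ := by rw [slice_sub, map_sub]
        _ ≤ ‖ι (P - Q)‖ := norm_slice_le ι hGauss M (P - Q)
    · calc ‖ι g‖ * ‖ι h‖ ^ q = ‖ι P‖ := hNP.symm
        _ ≤ max ‖ι P‖ ‖ι Q‖ := le_max_left _ _
        _ = ‖ι P - ι Q‖ := (norm_sub_eq_max hlt.ne).symm
        _ = ‖ι (P - Q)‖ := by rw [map_sub]

end Stmt17Aux


/-- The element `t₁` does not belong to `U_s`.  Setting: `C_∞` is the completion of an
algebraic closure of `𝔽_q((1/θ))` (abstractly: a complete, algebraically closed,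
non-archimedean normed field), `C_{s,∞} = Cs` is the completion of `C_∞(t₁, …, t_s)`
(with `s ≥ 1` variables, indexed by `Fin (s+1)`) for the Gauss valuation, axiomatized by
the embedding `ι` with the Gauss-norm and density properties, and `τ` is induced by the
`q`-power map on `C_∞`, fixing the `tᵢ`.  Claims: there is no `x ∈ C_{s,∞}^×` with
`τ(x) = t₁·x`; equivalently, there are no `β ∈ C_∞^×` and
`γ = ι g / ι h ∈ \bar 𝔽_q(t₁,…,t_s)^×` with `v_∞(t₁ − β·τ(γ)/γ) > 0`, i.e. with
`‖t₁ − β·τ(γ)/γ‖ < 1`. -/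
theorem stmt17 {s q : ℕ} (hq : 1 < q)
    {Cinf Cs : Type*} [NormedField Cinf] [CompleteSpace Cinf] [NormedField Cs]
    [CompleteSpace Cs] [IsUltrametricDist Cs]
    (halg : IsAlgClosed Cinf)
    (ι : MvPolynomial (Fin (s + 1)) Cinf →+* Cs)
    (hGauss : ∀ f : MvPolynomial (Fin (s + 1)) Cinf,
      ‖ι f‖ = ⨆ d : Fin (s + 1) →₀ ℕ, ‖MvPolynomial.coeff d f‖)
    (hdense : DenseRange
      fun fg : MvPolynomial (Fin (s + 1)) Cinf × MvPolynomial (Fin (s + 1)) Cinf =>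
        ι fg.1 / ι fg.2)
    (τ : Cs →+* Cs) (hτcont : Continuous τ)
    (hτnorm : ∀ x : Cs, ‖τ x‖ = ‖x‖ ^ q)
    (hτX : ∀ i : Fin (s + 1), τ (ι (MvPolynomial.X i)) = ι (MvPolynomial.X i))
    (hτC : ∀ c : Cinf, τ (ι (MvPolynomial.C c)) = ι (MvPolynomial.C (c ^ q))) :
    (¬ ∃ x : Cs, x ≠ 0 ∧ τ x = ι (MvPolynomial.X 0) * x) ∧
      ¬ ∃ (β : Cinf) (g h : MvPolynomial (Fin (s + 1)) Cinf),
          β ≠ 0 ∧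
          (∀ d, ∃ j : ℕ, 0 < j ∧
            MvPolynomial.coeff d g ^ q ^ j = MvPolynomial.coeff d g) ∧
          (∀ d, ∃ j : ℕ, 0 < j ∧
            MvPolynomial.coeff d h ^ q ^ j = MvPolynomial.coeff d h) ∧
          ι g ≠ 0 ∧ ι h ≠ 0 ∧
          ‖ι (MvPolynomial.X 0) -
              ι (MvPolynomial.C β) * τ (ι g / ι h) / (ι g / ι h)‖ < 1 := by
  have hq0 : q ≠ 0 := by omega
  have hadd : ∀ c d : Cinf, (c + d) ^ q = c ^ q + d ^ q := by
    intro c d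
    apply MvPolynomial.C_injective (Fin (s + 1)) Cinf
    apply Stmt17Aux.inj ι hGauss
    have h1 : ι (MvPolynomial.C ((c + d) ^ q)) = τ (ι (MvPolynomial.C (c + d))) := (hτC _).symm
    rw [h1, MvPolynomial.C_add, map_add, map_add, hτC, hτC, MvPolynomial.C_add, map_add]
  let φ : Cinf →+* Cinf :=
    { toFun := fun c => c ^ q
      map_one' := one_pow q
      map_mul' := fun x y => mul_pow x y q
      map_zero' := zero_pow hq0
      map_add' := hadd }
  have hφ : ∀ c, ‖φ c‖ = ‖c‖ ^ q := fun c => norm_pow c q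
  have hφi : Function.Injective φ := φ.injective
  have hcomm : ∀ f, τ (ι f) = ι (MvPolynomial.map φ f) := by
    intro f
    induction f using MvPolynomial.induction_on with
    | C c => rw [hτC, MvPolynomial.map_C]; rfl
    | add p p' hp hp' => rw [map_add, map_add, map_add, map_add, hp, hp']
    | mul_X p i hp => rw [map_mul, map_mul, map_mul, map_mul, hp, MvPolynomial.map_X, hτX]
  have key : ∀ (β : Cinf) (g h : MvPolynomial (Fin (s + 1)) Cinf), ι g ≠ 0 → ι h ≠ 0 →
      1 ≤ ‖ι (MvPolynomial.X 0) - ι (MvPolynomial.C β) * τ (ι g / ι h) / (ι g / ι h)‖ := by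
    intro β g h hg hh
    have hg0 : g ≠ 0 := fun hc => hg (by rw [hc, map_zero])
    have hh0 : h ≠ 0 := fun hc => hh (by rw [hc, map_zero])
    have hmapinj : Function.Injective (MvPolynomial.map (σ := Fin (s + 1)) φ) :=
      MvPolynomial.map_injective φ hφi
    have hg' : ι (MvPolynomial.map φ g) ≠ 0 := by
      intro hc
      have := Stmt17Aux.norm_pos ι hGauss (f := MvPolynomial.map φ g)
        (fun hc2 => hg0 (hmapinj (by rw [hc2, map_zero])))
      rw [hc, norm_zero] at this
      exact lt_irrefl _ this
    have hh' : ι (MvPolynomial.map φ h) ≠ 0 := by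
      intro hc
      have := Stmt17Aux.norm_pos ι hGauss (f := MvPolynomial.map φ h)
        (fun hc2 => hh0 (hmapinj (by rw [hc2, map_zero])))
      rw [hc, norm_zero] at this
      exact lt_irrefl _ this
    have heq : ι (MvPolynomial.X 0) - ι (MvPolynomial.C β) * τ (ι g / ι h) / (ι g / ι h)
        = ι (MvPolynomial.X 0 * (g * MvPolynomial.map φ h)
            - MvPolynomial.C β * (MvPolynomial.map φ g * h))
          / (ι g * ι (MvPolynomial.map φ h)) := by
      rw [map_div₀, hcomm g, hcomm h, map_sub, map_mul, map_mul, map_mul, map_mul]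
      field_simp
    have hpos : 0 < ‖ι g‖ * ‖ι h‖ ^ q :=
      mul_pos (Stmt17Aux.norm_pos ι hGauss hg0)
        (pow_pos (Stmt17Aux.norm_pos ι hGauss hh0) q)
    have hden : ‖ι g * ι (MvPolynomial.map φ h)‖ = ‖ι g‖ * ‖ι h‖ ^ q := by
      rw [norm_mul, Stmt17Aux.norm_map ι hGauss hq0 φ hφ]
    rw [heq, norm_div, hden]
    exact (one_le_div hpos).mpr (Stmt17Aux.main_ineq ι hGauss hq0 φ hφ hφi β hg0 hh0)
  constructor
  · rintro ⟨x, hx0, hx⟩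
    have hxpos : 0 < ‖x‖ := norm_pos_iff.mpr hx0
    have hεpos : (0:ℝ) < min (‖x‖ / 2) (1 / 2) := lt_min (by positivity) (by norm_num)
    obtain ⟨⟨g, h⟩, hgh⟩ := Metric.denseRange_iff.mp hdense x (min (‖x‖ / 2) (1 / 2)) hεpos
    set ε := min (‖x‖ / 2) (1 / 2) with hε
    set y := ι g / ι h with hy
    have hxy : ‖x - y‖ < ε := by rwa [dist_eq_norm] at hgh
    have hεx : ε < ‖x‖ := lt_of_le_of_lt (min_le_left _ _) (by linarith)
    have h1 : ‖y - x‖ < ‖x‖ := by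
      rw [← neg_sub, norm_neg]
      exact hxy.trans hεx
    have hyx : ‖y‖ = ‖x‖ := by
      have h2 : ‖x‖ ≠ ‖y - x‖ := fun hc => absurd h1 (by rw [← hc]; exact lt_irrefl _)
      calc ‖y‖ = ‖x + (y - x)‖ := by rw [show x + (y - x) = y by ring]
        _ = max ‖x‖ ‖y - x‖ := norm_add_eq_max_of_norm_ne_norm h2
        _ = ‖x‖ := max_eq_left h1.le
    have hy0 : y ≠ 0 := fun hc => by rw [hc, norm_zero] at hyx; exact hxpos.ne hyx
    have hgne : ι g ≠ 0 := fun hc => hy0 (by rw [hy, hc, zero_div])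
    have hhne : ι h ≠ 0 := fun hc => hy0 (by rw [hy, hc, div_zero])
    have hε1 : ε ≤ 1 := (min_le_right _ _).trans (by norm_num)
    have hnum : ‖ι (MvPolynomial.X 0) * y - τ y‖ < ‖x‖ := by
      have hrw : ι (MvPolynomial.X (0 : Fin (s + 1))) * y - τ y
          = ι (MvPolynomial.X 0) * (y - x) + (τ x - τ y) := by rw [hx]; ring
      rw [hrw]
      apply lt_of_le_of_lt (norm_add_le_max _ _)
      apply max_lt
      · rw [norm_mul, Stmt17Aux.norm_X ι hGauss 0, one_mul, ← neg_sub, norm_neg]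
        exact hxy.trans hεx
      · rw [← map_sub, hτnorm]
        calc ‖x - y‖ ^ q
            ≤ ‖x - y‖ := pow_le_of_le_one (norm_nonneg _) (le_of_lt (hxy.trans_le hε1)) hq0
          _ < ‖x‖ := hxy.trans hεx
    have hfrac : ‖ι (MvPolynomial.X 0) - τ y / y‖ < 1 := by
      have hrw : ι (MvPolynomial.X (0 : Fin (s + 1))) - τ y / y
          = (ι (MvPolynomial.X 0) * y - τ y) / y := by field_simp
      rw [hrw, norm_div, hyx, div_lt_one hxpos]
      exact hnum
    have hcontr := key 1 g h hgne hhne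
    rw [MvPolynomial.C_1, map_one, one_mul, ← hy] at hcontr
    exact absurd hfrac (not_lt.mpr hcontr)
  · rintro ⟨β, g, h, hβ, _, _, hg, hh, hlt⟩
    exact absurd hlt (not_lt.mpr (key β g h hg hh))
end
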